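/- Let a ≥ 0, a₁, a₂ > 0, α ∈ (0,1], and let f ∈ Lip_M^{(a₁,a₂)}(α), i.e. f : [0,∞) → ℝ is bounded and continuous and |f(t) − f(x)| ≤ M·|t−x|^α/(t + a₁x² + a₂x)^{α/2} for all x, t ∈ (0,∞), where M > 0. Then for all n ∈ ℕ and all x > 0, |K_n^a(f;x) − f(x)| ≤ M·(u_{n,2}^a(x)/(a₁x² + a₂x))^{α/2}, where u_{n,2}^a(x) = K_n^a((t−x)²;x). -/

import Mathlib

open MeasureTheory Filter

noncomputable section

/-- Rising factorial `(n)_i = n(n+1)⋯(n+i-1)`, with `(n)_0 = 1`. -/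
def risingFac (n : ℕ) : ℕ → ℝ
  | 0 => 1
  | i + 1 => risingFac n i * ((n : ℝ) + i)

/-- `P_k(n,a) = Σ_{i=0}^{k} C(k,i) (n)_i a^(k-i)`. -/
def Pba (k n : ℕ) (a : ℝ) : ℝ :=
  ∑ i ∈ Finset.range (k + 1), (k.choose i : ℝ) * risingFac n i * a ^ (k - i)

/-- Generalized Baskakov basis function `W_{n,k}^a(x)`. -/
def Wgb (a : ℝ) (n k : ℕ) (x : ℝ) : ℝ :=
  Real.exp (-(a * x) / (1 + x)) * (Pba k n a / (Nat.factorial k : ℝ)) * x ^ k /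
    (1 + x) ^ (n + k)

/-- Generalized Baskakov–Kantorovich operator `K_n^a(f;x)`. -/
def Kgb (a : ℝ) (n : ℕ) (f : ℝ → ℝ) (x : ℝ) : ℝ :=
  ((n : ℝ) + 1) * ∑' k : ℕ,
    Wgb a n k x * ∫ t in ((k : ℝ) / ((n : ℝ) + 1))..(((k : ℝ) + 1) / ((n : ℝ) + 1)), f t

lemma risingFac_eq_ascFactorial (n i : ℕ) : risingFac n i = (n.ascFactorial i : ℝ) := by
  induction i with
  | zero => simp [risingFac]
  | succ i ih => rw [risingFac, ih, Nat.ascFactorial_succ]; push_cast; ring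

lemma risingFac_nonneg (n i : ℕ) : 0 ≤ risingFac n i := by
  rw [risingFac_eq_ascFactorial]; positivity

lemma Pba_nonneg (k n : ℕ) {a : ℝ} (ha : 0 ≤ a) : 0 ≤ Pba k n a := by
  refine Finset.sum_nonneg fun i _ => ?_
  have := risingFac_nonneg n i
  positivity

lemma risingFac_succ_eq (m i : ℕ) :
    risingFac (m + 1) i = (i.factorial : ℝ) * ((i + m).choose m : ℕ) := by
  rw [risingFac_eq_ascFactorial, Nat.ascFactorial_eq_factorial_mul_choose]
  have : (m + i).choose i = (i + m).choose m := by
    rw [Nat.add_comm m i, ← Nat.choose_symm (Nat.le_add_right i m)]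
    congr 1
    omega
  rw [this]
  push_cast
  ring

lemma risingFac_zero_succ (i : ℕ) : risingFac 0 (i + 1) = 0 := by
  induction i with
  | zero => simp [risingFac]
  | succ i ih => rw [risingFac, ih, zero_mul]

/-- binomial series -/
lemma hasSum_risingFac (n : ℕ) {y : ℝ} (hy : |y| < 1) :
    HasSum (fun i => risingFac n i / (i.factorial : ℝ) * y ^ i) (1 / (1 - y) ^ n) := by
  cases n with
  | zero =>
    have : (fun i => risingFac 0 i / (i.factorial : ℝ) * y ^ i) =
        fun i => if i = 0 then (1 : ℝ) else 0 := by
      funext i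
      cases i with
      | zero => simp [risingFac]
      | succ i => simp [risingFac_zero_succ]
    rw [this]
    simpa using hasSum_ite_eq 0 (1 : ℝ)
  | succ m =>
    have h := hasSum_choose_mul_geometric_of_norm_lt_one (𝕜 := ℝ) m
      (r := y) (by rwa [Real.norm_eq_abs])
    have hf : (fun i => risingFac (m + 1) i / (i.factorial : ℝ) * y ^ i) =
        fun i => (((i + m).choose m : ℕ) : ℝ) * y ^ i := by
      funext i
      rw [risingFac_succ_eq]
      have hfac : (i.factorial : ℝ) ≠ 0 := Nat.cast_ne_zero.2 i.factorial_ne_zero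
      field_simp
    rw [hf]; exact h

lemma norm_risingFac_term (n i : ℕ) (y : ℝ) :
    ‖risingFac n i / (i.factorial : ℝ) * y ^ i‖ =
      risingFac n i / (i.factorial : ℝ) * |y| ^ i := by
  rw [Real.norm_eq_abs, abs_mul, abs_div, abs_pow,
    abs_of_nonneg (risingFac_nonneg n i), Nat.abs_cast]

lemma hasSum_Pba (n : ℕ) (a : ℝ) {y : ℝ} (hy : |y| < 1) :
    HasSum (fun k => Pba k n a / (k.factorial : ℝ) * y ^ k)
      (1 / (1 - y) ^ n * Real.exp (a * y)) := by
  set F : ℕ → ℝ := fun i => risingFac n i / (i.factorial : ℝ) * y ^ i with hF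
  set G : ℕ → ℝ := fun j => (a * y) ^ j / (j.factorial : ℝ) with hG
  have hFsum : HasSum F (1 / (1 - y) ^ n) := hasSum_risingFac n hy
  have hGsum : HasSum G (Real.exp (a * y)) := by
    rw [Real.exp_eq_exp_ℝ]
    exact NormedSpace.expSeries_div_hasSum_exp (a * y)
  have hFn : Summable fun i => ‖F i‖ := by
    have := (hasSum_risingFac n (y := |y|) (by rwa [abs_abs])).summable
    refine this.congr fun i => ?_
    rw [norm_risingFac_term]
  have hGn : Summable fun j => ‖G j‖ := by
    have := Real.summable_pow_div_factorial |a * y|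
    refine this.congr fun j => ?_
    simp [hG, abs_div, abs_pow, abs_mul]
  have key := hasSum_sum_range_mul_of_summable_norm hFn hGn
  rw [hFsum.tsum_eq, hGsum.tsum_eq] at key
  have heq : (fun k => ∑ i ∈ Finset.range (k + 1), F i * G (k - i)) =
      fun k => Pba k n a / (k.factorial : ℝ) * y ^ k := by
    funext k
    rw [Pba, Finset.sum_div, Finset.sum_mul]
    refine Finset.sum_congr rfl fun i hi => ?_
    have hik : i ≤ k := Nat.lt_succ_iff.mp (Finset.mem_range.mp hi)
    have hC : (k.choose i : ℝ) * (i.factorial : ℝ) * ((k - i).factorial : ℝ)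
        = (k.factorial : ℝ) := by
      exact_mod_cast congrArg (Nat.cast (R := ℝ)) (Nat.choose_mul_factorial_mul_factorial hik)
    have hyk : y ^ k = y ^ i * y ^ (k - i) := by
      rw [← pow_add]
      congr 1
      omega
    have h1 : (i.factorial : ℝ) ≠ 0 := Nat.cast_ne_zero.2 i.factorial_ne_zero
    have h2 : ((k - i).factorial : ℝ) ≠ 0 := Nat.cast_ne_zero.2 (k - i).factorial_ne_zero
    have h3 : (k.factorial : ℝ) ≠ 0 := Nat.cast_ne_zero.2 k.factorial_ne_zero
    simp only [hF, hG]
    rw [mul_pow, hyk]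
    field_simp
    linear_combination (-1 * risingFac n i * y ^ i * y ^ (k - i) * a ^ (k - i)) * hC
  rwa [heq] at key

lemma Wgb_eq (a : ℝ) (n k : ℕ) {x : ℝ} (hx : 0 < x) :
    Wgb a n k x = (Real.exp (-(a * x) / (1 + x)) / (1 + x) ^ n) *
      (Pba k n a / (k.factorial : ℝ) * (x / (1 + x)) ^ k) := by
  have h1 : (0:ℝ) < 1 + x := by linarith
  rw [Wgb, pow_add, div_pow]
  field_simp

lemma Wgb_nonneg {a : ℝ} (n k : ℕ) {x : ℝ} (ha : 0 ≤ a) (hx : 0 ≤ x) :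
    0 ≤ Wgb a n k x := by
  have h1 : (0:ℝ) < 1 + x := by linarith
  have h2 := Pba_nonneg k n ha
  rw [Wgb]
  positivity

lemma y_lt_one {x : ℝ} (hx : 0 < x) : |x / (1 + x)| < 1 := by
  have h1 : (0:ℝ) < 1 + x := by linarith
  rw [abs_of_nonneg (by positivity), div_lt_one h1]
  linarith

lemma one_sub_y {x : ℝ} (hx : 0 < x) : 1 - x / (1 + x) = 1 / (1 + x) := by
  have h1 : (0:ℝ) < 1 + x := by linarith
  field_simp
  ring

lemma hasSum_Wgb {a : ℝ} (n : ℕ) {x : ℝ} (hx : 0 < x) :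
    HasSum (fun k => Wgb a n k x) 1 := by
  have h1 : (0:ℝ) < 1 + x := by linarith
  have h := (hasSum_Pba n a (y_lt_one hx)).mul_left
    (Real.exp (-(a * x) / (1 + x)) / (1 + x) ^ n)
  have heq : (fun k => Real.exp (-(a * x) / (1 + x)) / (1 + x) ^ n *
      (Pba k n a / (k.factorial : ℝ) * (x / (1 + x)) ^ k)) = fun k => Wgb a n k x := by
    funext k
    rw [Wgb_eq a n k hx]
  rw [heq] at h
  suffices hv : Real.exp (-(a * x) / (1 + x)) / (1 + x) ^ n *
      (1 / (1 - x / (1 + x)) ^ n * Real.exp (a * (x / (1 + x)))) = 1 by rwa [hv] at h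
  have hexp : Real.exp (-(a * x) / (1 + x)) * Real.exp (a * (x / (1 + x))) = 1 := by
    rw [← Real.exp_add, show -(a * x) / (1 + x) + a * (x / (1 + x)) = 0 by field_simp; ring]
    exact Real.exp_zero
  have hp : ((1:ℝ) + x) ^ n ≠ 0 := by positivity
  have hmain : Real.exp (-(a * x) / (1 + x)) / (1 + x) ^ n *
      ((1 + x) ^ n * Real.exp (a * (x / (1 + x)))) =
      Real.exp (-(a * x) / (1 + x)) * Real.exp (a * (x / (1 + x))) := by
    field_simp
  rw [one_sub_y hx, div_pow, one_pow, one_div_one_div, hmain, hexp]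

lemma summable_Wgb_sq {a : ℝ} (n : ℕ) {x : ℝ} (ha : 0 ≤ a) (hx : 0 < x) :
    Summable (fun k => Wgb a n k x * ((k : ℝ) + 1) ^ 2) := by
  have h1 : (0:ℝ) < 1 + x := by linarith
  set y : ℝ := x / (1 + x) with hy
  have hy0 : 0 < y := by positivity
  have hy1 : y < 1 := by rw [div_lt_one h1]; linarith
  set y' : ℝ := (1 + y) / 2 with hy'
  have hy'0 : 0 < y' := by positivity
  have hy'1 : y' < 1 := by rw [hy']; linarith
  have hyy' : y < y' := by rw [hy']; linarith
  have hsum' : Summable (fun k => Pba k n a / (k.factorial : ℝ) * y' ^ k) :=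
    (hasSum_Pba n a (by rw [abs_of_pos hy'0]; exact hy'1)).summable
  have hterm_nonneg : ∀ k, 0 ≤ Pba k n a / (k.factorial : ℝ) * y' ^ k := by
    intro k
    have := Pba_nonneg k n ha
    positivity
  set C : ℝ := ∑' k, Pba k n a / (k.factorial : ℝ) * y' ^ k with hC
  have hbound : ∀ k, Pba k n a / (k.factorial : ℝ) * y' ^ k ≤ C :=
    fun k => Summable.le_tsum hsum' k fun j _ => hterm_nonneg j
  have hC0 : 0 ≤ C := le_trans (hterm_nonneg 0) (hbound 0)
  set r : ℝ := y / y' with hr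
  have hr0 : 0 ≤ r := by positivity
  have hr1 : r < 1 := by rw [hr, div_lt_one hy'0]; exact hyy'
  set D : ℝ := Real.exp (-(a * x) / (1 + x)) / (1 + x) ^ n with hD
  have hD0 : 0 ≤ D := by positivity
  -- summable majorant
  have hmaj : Summable (fun k : ℕ => D * C * (((k : ℝ) + 1) ^ 2 * r ^ k)) := by
    refine Summable.mul_left _ ?_
    have hs2 : Summable (fun k : ℕ => (k : ℝ) ^ 2 * r ^ k) :=
      summable_pow_mul_geometric_of_norm_lt_one 2 (by rwa [Real.norm_eq_abs, abs_of_nonneg hr0])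
    have hs1 : Summable (fun k : ℕ => (k : ℝ) ^ 1 * r ^ k) :=
      summable_pow_mul_geometric_of_norm_lt_one 1 (by rwa [Real.norm_eq_abs, abs_of_nonneg hr0])
    have hs0 : Summable (fun k : ℕ => r ^ k) :=
      summable_geometric_of_lt_one hr0 hr1
    have := (hs2.add ((hs1.mul_left 2).add hs0))
    refine this.congr fun k => ?_
    ring
  refine Summable.of_nonneg_of_le (fun k => ?_) (fun k => ?_) hmaj
  · have := Wgb_nonneg (a := a) n k (x := x) ha hx.le
    positivity
  · rw [Wgb_eq a n k hx, ← hy, ← hD]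
    have hy'k : (y' : ℝ) ^ k ≠ 0 := by positivity
    have hyk : y ^ k = y' ^ k * r ^ k := by
      have hry : r * y' = y := by
        rw [hr]
        field_simp
      rw [← hry, mul_pow]
      ring
    rw [hyk]
    calc D * (Pba k n a / (k.factorial : ℝ) * (y' ^ k * r ^ k)) * ((k : ℝ) + 1) ^ 2
        = D * ((Pba k n a / (k.factorial : ℝ) * y' ^ k) * (r ^ k * ((k : ℝ) + 1) ^ 2)) := by
          ring
      _ ≤ D * (C * (r ^ k * ((k : ℝ) + 1) ^ 2)) := by
          apply mul_le_mul_of_nonneg_left _ hD0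
          apply mul_le_mul_of_nonneg_right (hbound k)
          positivity
      _ = D * C * (((k : ℝ) + 1) ^ 2 * r ^ k) := by ring

lemma rpow_le_one_add {u β : ℝ} (hu : 0 ≤ u) (hβ0 : 0 ≤ β) (hβ1 : β ≤ 1) :
    u ^ β ≤ 1 + u := by
  rcases le_total u 1 with h | h
  · calc u ^ β ≤ 1 := Real.rpow_le_one hu h hβ0
      _ ≤ 1 + u := by linarith
  · calc u ^ β ≤ u ^ (1:ℝ) := Real.rpow_le_rpow_of_exponent_le h hβ1
      _ = u := Real.rpow_one u
      _ ≤ 1 + u := by linarith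

lemma interval_holder {u v x α : ℝ} (huv : u < v) (hα : 0 < α) (hα1 : α ≤ 1) :
    (∫ t in Set.Ioc u v, |t - x| ^ α) ≤
      (∫ t in Set.Ioc u v, (t - x) ^ 2) ^ (α / 2) * (v - u) ^ (1 - α / 2) := by
  set μ := (volume : Measure ℝ).restrict (Set.Ioc u v) with hμ
  have hμuniv : μ Set.univ = ENNReal.ofReal (v - u) := by
    rw [hμ, Measure.restrict_apply MeasurableSet.univ, Set.univ_inter, Real.volume_Ioc]
  haveI : IsFiniteMeasure μ := ⟨by rw [hμuniv]; exact ENNReal.ofReal_lt_top⟩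
  have hα2 : α < 2 := by linarith
  have hpq : Real.HolderConjugate (2 / α) (2 / (2 - α)) := by
    rw [Real.holderConjugate_iff]
    constructor
    · rw [lt_div_iff₀ hα]; linarith
    · rw [inv_div, inv_div]; ring
  have hfc : Continuous (fun t : ℝ => |t - x| ^ α) := by
    refine Continuous.rpow_const ?_ fun t => Or.inr hα.le
    exact (continuous_id.sub continuous_const).abs
  have hmemf : MemLp (fun t : ℝ => |t - x| ^ α) (ENNReal.ofReal (2 / α)) μ := by
    refine MemLp.mono_exponent (q := ⊤) ?_ le_top
    refine memLp_top_of_bound hfc.aestronglyMeasurable ((|u| + |v| + |x|) ^ α) ?_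
    refine (ae_restrict_mem measurableSet_Ioc).mono fun t ht => ?_
    rw [Real.norm_eq_abs, abs_of_nonneg (Real.rpow_nonneg (abs_nonneg _) _)]
    refine Real.rpow_le_rpow (abs_nonneg _) ?_ hα.le
    have h1 : |t| ≤ |u| + |v| := by
      rw [abs_le]
      constructor
      · have := neg_abs_le u
        have := abs_nonneg v
        have := ht.1
        linarith
      · have := le_abs_self v
        have := abs_nonneg u
        have := ht.2
        linarith
    calc |t - x| ≤ |t| + |x| := abs_sub _ _
      _ ≤ |u| + |v| + |x| := by linarith
  have hmemg : MemLp (fun _ : ℝ => (1 : ℝ)) (ENNReal.ofReal (2 / (2 - α))) μ :=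
    memLp_const 1
  have h := integral_mul_le_Lp_mul_Lq_of_nonneg hpq
    (f := fun t : ℝ => |t - x| ^ α) (g := fun _ : ℝ => (1 : ℝ))
    (Filter.Eventually.of_forall fun t => Real.rpow_nonneg (abs_nonneg _) _)
    (Filter.Eventually.of_forall fun _ => zero_le_one) hmemf hmemg
  simp only [mul_one] at h
  have e1 : ∀ t : ℝ, (|t - x| ^ α) ^ (2 / α) = (t - x) ^ 2 := by
    intro t
    rw [← Real.rpow_mul (abs_nonneg _), show α * (2 / α) = 2 by field_simp]
    rw [show ((2:ℝ) : ℝ) = ((2 : ℕ) : ℝ) by norm_num, Real.rpow_natCast, sq_abs]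
  have e2 : (∫ t in Set.Ioc u v, (fun t : ℝ => |t - x| ^ α) t ^ (2/α) ∂volume)
      = ∫ t in Set.Ioc u v, (t - x) ^ 2 := by
    refine integral_congr_ae (Filter.Eventually.of_forall fun t => ?_)
    exact e1 t
  have e3 : (∫ _ in Set.Ioc u v, (1:ℝ) ^ (2/(2-α)) ∂volume) = v - u := by
    simp only [Real.one_rpow]
    rw [setIntegral_const, measureReal_def, Real.volume_Ioc, smul_eq_mul, mul_one,
      ENNReal.toReal_ofReal (by linarith)]
  rw [hμ] at h
  rw [e2, e3] at h
  have e4 : 1 / (2 / α) = α / 2 := by rw [one_div, inv_div]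
  have e5 : 1 / (2 / (2 - α)) = 1 - α / 2 := by rw [one_div, inv_div]; ring
  rwa [e4, e5] at h

set_option maxHeartbeats 1600000 in
/-- approximation in the Lipschitz-type space `Lip_M^{(a₁,a₂)}(α)`. -/
theorem statement1 (a M a₁ a₂ α : ℝ) (ha : 0 ≤ a) (hM : 0 < M) (ha₁ : 0 < a₁)
    (ha₂ : 0 < a₂) (hα : 0 < α) (hα1 : α ≤ 1) (f : ℝ → ℝ)
    (hbdd : ∃ B : ℝ, ∀ x : ℝ, 0 ≤ x → |f x| ≤ B)
    (hcont : ContinuousOn f (Set.Ici 0))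
    (hLip : ∀ x t : ℝ, 0 < x → 0 < t →
      |f t - f x| ≤ M * |t - x| ^ α / (t + a₁ * x ^ 2 + a₂ * x) ^ (α / 2)) :
    ∀ (n : ℕ) (x : ℝ), 0 < x →
      |Kgb a n f x - f x| ≤
        M * ((Kgb a n (fun t => (t - x) ^ 2) x) / (a₁ * x ^ 2 + a₂ * x)) ^ (α / 2) := by
  obtain ⟨B, hB⟩ := hbdd
  intro n x hx
  have hB0 : 0 ≤ B := le_trans (abs_nonneg _) (hB 0 le_rfl)
  set c : ℝ := (n : ℝ) + 1 with hcdef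
  have hc0 : (0:ℝ) < c := by positivity
  set A : ℝ := a₁ * x ^ 2 + a₂ * x with hAdef
  have hA0 : 0 < A := by
    have h1 := mul_pos ha₁ (pow_pos hx 2)
    have h2 := mul_pos ha₂ hx
    rw [hAdef]; linarith
  set w : ℕ → ℝ := fun k => Wgb a n k x with hwdef
  have hw0 : ∀ k, 0 ≤ w k := fun k => Wgb_nonneg n k ha hx.le
  have hw1 : HasSum w 1 := hasSum_Wgb n hx
  have hwS : Summable w := hw1.summable
  have hwsq : Summable (fun k => w k * ((k:ℝ)+1)^2) := summable_Wgb_sq n ha hx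
  have hult : ∀ k : ℕ, (k:ℝ)/c < ((k:ℝ)+1)/c := fun k => by
    apply div_lt_div_of_pos_right ?_ hc0
    linarith
  have hu0 : ∀ k : ℕ, 0 ≤ (k:ℝ)/c := fun k => by positivity
  have hvol : ∀ k : ℕ, volume (Set.Ioc ((k:ℝ)/c) (((k:ℝ)+1)/c)) = ENNReal.ofReal (1/c) :=
    fun k => by rw [Real.volume_Ioc]; congr 1; ring
  have hvolR : ∀ k : ℕ, (volume (Set.Ioc ((k:ℝ)/c) (((k:ℝ)+1)/c))).toReal = 1/c :=
    fun k => by rw [hvol k, ENNReal.toReal_ofReal (by positivity)]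
  have hKgb : ∀ g : ℝ → ℝ, Kgb a n g x
      = c * ∑' k, w k * ∫ t in Set.Ioc ((k:ℝ)/c) (((k:ℝ)+1)/c), g t := by
    intro g
    rw [Kgb, ← hcdef]
    congr 1
    refine tsum_congr fun k => ?_
    rw [hwdef, intervalIntegral.integral_of_le (hult k).le]
  -- integrability
  have hsubI : ∀ k : ℕ, Set.Icc ((k:ℝ)/c) (((k:ℝ)+1)/c) ⊆ Set.Ici (0:ℝ) :=
    fun k t ht => le_trans (hu0 k) ht.1
  have hIf : ∀ k : ℕ, IntegrableOn f (Set.Ioc ((k:ℝ)/c) (((k:ℝ)+1)/c)) :=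
    fun k => ((hcont.mono (hsubI k)).integrableOn_Icc).mono_set Set.Ioc_subset_Icc_self
  have hcsq : Continuous (fun t : ℝ => (t - x)^2) := by continuity
  have hIsq : ∀ k : ℕ, IntegrableOn (fun t => (t - x)^2) (Set.Ioc ((k:ℝ)/c) (((k:ℝ)+1)/c)) :=
    fun k => hcsq.integrableOn_Icc.mono_set Set.Ioc_subset_Icc_self
  have hcα : Continuous (fun t : ℝ => |t - x| ^ α) :=
    Continuous.rpow_const ((continuous_id.sub continuous_const).abs) (fun t => Or.inr hα.le)
  have hIα : ∀ k : ℕ, IntegrableOn (fun t => |t - x| ^ α) (Set.Ioc ((k:ℝ)/c) (((k:ℝ)+1)/c)) :=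
    fun k => hcα.integrableOn_Icc.mono_set Set.Ioc_subset_Icc_self
  have hintα0 : ∀ k : ℕ, 0 ≤ ∫ t in Set.Ioc ((k:ℝ)/c) (((k:ℝ)+1)/c), |t - x| ^ α :=
    fun k => setIntegral_nonneg measurableSet_Ioc fun t _ => Real.rpow_nonneg (abs_nonneg _) _
  have hintsq0 : ∀ k : ℕ, 0 ≤ ∫ t in Set.Ioc ((k:ℝ)/c) (((k:ℝ)+1)/c), (t - x)^2 :=
    fun k => setIntegral_nonneg measurableSet_Ioc fun t _ => sq_nonneg _
  -- pointwise bound on intervals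
  have htb : ∀ k : ℕ, ∀ t ∈ Set.Ioc ((k:ℝ)/c) (((k:ℝ)+1)/c),
      |t - x| ≤ ((k:ℝ)+1) * (1/c + x) := by
    intro k t ht
    have ht0 : 0 ≤ t := le_trans (hu0 k) ht.1.le
    have hk1 : (1:ℝ) ≤ (k:ℝ)+1 := by
      have : (0:ℝ) ≤ (k:ℝ) := Nat.cast_nonneg k
      linarith
    calc |t - x| ≤ |t| + |x| := abs_sub _ _
      _ = t + x := by rw [abs_of_nonneg ht0, abs_of_nonneg hx.le]
      _ ≤ ((k:ℝ)+1)/c + ((k:ℝ)+1) * x := by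
          have h1 := ht.2
          nlinarith
      _ = ((k:ℝ)+1) * (1/c + x) := by ring
  -- summabilities
  have hSf : Summable (fun k => w k * ∫ t in Set.Ioc ((k:ℝ)/c) (((k:ℝ)+1)/c), f t) := by
    refine Summable.of_norm_bounded (hwS.mul_right (B * (1/c))) fun k => ?_
    rw [Real.norm_eq_abs, abs_mul, abs_of_nonneg (hw0 k)]
    refine mul_le_mul_of_nonneg_left ?_ (hw0 k)
    have h := norm_setIntegral_le_of_norm_le_const (C := B)
      (by rw [hvol k]; exact ENNReal.ofReal_lt_top)
      (fun t ht => by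
        rw [Real.norm_eq_abs]
        exact hB t (le_trans (hu0 k) ht.1.le))
    rw [Real.norm_eq_abs, measureReal_def, hvolR k] at h
    exact h
  have hSsq : Summable (fun k => w k * ∫ t in Set.Ioc ((k:ℝ)/c) (((k:ℝ)+1)/c), (t - x)^2) := by
    refine Summable.of_norm_bounded
      (hwsq.mul_right ((1/c + x)^2 * (1/c))) fun k => ?_
    rw [Real.norm_eq_abs, abs_mul, abs_of_nonneg (hw0 k)]
    have h := norm_setIntegral_le_of_norm_le_const (f := fun t => (t - x)^2) (C := (((k:ℝ)+1) * (1/c + x))^2)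
      (by rw [hvol k]; exact ENNReal.ofReal_lt_top)
      (fun t ht => by
        rw [Real.norm_eq_abs, abs_of_nonneg (sq_nonneg _), ← sq_abs]
        exact pow_le_pow_left₀ (abs_nonneg _) (htb k t ht) 2)
    rw [Real.norm_eq_abs, measureReal_def, hvolR k] at h
    calc w k * |∫ t in Set.Ioc ((k:ℝ)/c) (((k:ℝ)+1)/c), (t - x)^2|
        ≤ w k * ((((k:ℝ)+1) * (1/c + x))^2 * (1/c)) := mul_le_mul_of_nonneg_left h (hw0 k)
      _ = w k * ((k:ℝ)+1)^2 * ((1/c + x)^2 * (1/c)) := by ring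
  have hSα : Summable (fun k => w k * ∫ t in Set.Ioc ((k:ℝ)/c) (((k:ℝ)+1)/c), |t - x| ^ α) := by
    refine Summable.of_norm_bounded
      (hwsq.mul_right ((1 + (1/c + x)) * (1/c))) fun k => ?_
    rw [Real.norm_eq_abs, abs_mul, abs_of_nonneg (hw0 k)]
    have hk1 : (1:ℝ) ≤ ((k:ℝ)+1)^2 := by
      have : (0:ℝ) ≤ (k:ℝ) := Nat.cast_nonneg k
      nlinarith
    have h := norm_setIntegral_le_of_norm_le_const (C := 1 + (((k:ℝ)+1) * (1/c + x)))
      (by rw [hvol k]; exact ENNReal.ofReal_lt_top)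
      (fun t ht => by
        rw [Real.norm_eq_abs, abs_of_nonneg (Real.rpow_nonneg (abs_nonneg _) _)]
        calc |t - x| ^ α ≤ 1 + |t - x| := rpow_le_one_add (abs_nonneg _) hα.le hα1
          _ ≤ 1 + (((k:ℝ)+1) * (1/c + x)) := by
              have h1 := htb k t ht
              linarith)
    rw [Real.norm_eq_abs, measureReal_def, hvolR k] at h
    calc w k * |∫ t in Set.Ioc ((k:ℝ)/c) (((k:ℝ)+1)/c), |t - x| ^ α|
        ≤ w k * ((1 + (((k:ℝ)+1) * (1/c + x))) * (1/c)) := mul_le_mul_of_nonneg_left h (hw0 k)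
      _ ≤ w k * ((k:ℝ)+1)^2 * ((1 + (1/c + x)) * (1/c)) := by
          have hwk := hw0 k
          have hcinv : (0:ℝ) < 1/c := by positivity
          have hq0 : (0:ℝ) ≤ 1/c + x := by positivity
          have hk2 : (k:ℝ)+1 ≤ ((k:ℝ)+1)^2 := by nlinarith [show (0:ℝ) ≤ (k:ℝ) from Nat.cast_nonneg k]
          nlinarith [mul_le_mul_of_nonneg_left hk1 (mul_nonneg hwk hcinv.le),
            mul_le_mul_of_nonneg_left hk2 (mul_nonneg (mul_nonneg hwk hq0) hcinv.le)]
  -- Step A : centering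
  have hIconst : ∀ k : ℕ, IntegrableOn (fun _ => f x) (Set.Ioc ((k:ℝ)/c) (((k:ℝ)+1)/c)) :=
    fun k => integrableOn_const (by rw [hvol k]; exact ENNReal.ofReal_ne_top)
  have hsubint : ∀ k : ℕ, (∫ t in Set.Ioc ((k:ℝ)/c) (((k:ℝ)+1)/c), (f t - f x))
      = (∫ t in Set.Ioc ((k:ℝ)/c) (((k:ℝ)+1)/c), f t) - f x * (1/c) := by
    intro k
    rw [integral_sub (hIf k) (hIconst k), setIntegral_const, measureReal_def, hvolR k, smul_eq_mul, mul_comm]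
  have hSsub : Summable (fun k => w k * ∫ t in Set.Ioc ((k:ℝ)/c) (((k:ℝ)+1)/c), (f t - f x)) := by
    refine ((hSf.sub (hwS.mul_right (f x * (1/c))))).congr fun k => ?_
    rw [hsubint k]; ring
  have hcenter : Kgb a n f x - f x
      = c * ∑' k, w k * ∫ t in Set.Ioc ((k:ℝ)/c) (((k:ℝ)+1)/c), (f t - f x) := by
    rw [hKgb f]
    have h2 : (∑' k, w k * ∫ t in Set.Ioc ((k:ℝ)/c) (((k:ℝ)+1)/c), (f t - f x))
        = (∑' k, w k * ∫ t in Set.Ioc ((k:ℝ)/c) (((k:ℝ)+1)/c), f t)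
          - (∑' k, w k * (f x * (1/c))) := by
      rw [← Summable.tsum_sub hSf (hwS.mul_right (f x * (1/c)))]
      exact tsum_congr fun k => by rw [hsubint k]; ring
    rw [h2, tsum_mul_right, hw1.tsum_eq, one_mul, mul_sub]
    have h3 : c * (f x * (1/c)) = f x := by field_simp
    rw [h3]
  -- Step B : Lipschitz bound
  set K1 : ℝ := M / A ^ (α/2) with hK1
  have hApow : (0:ℝ) < A ^ (α/2) := Real.rpow_pos_of_pos hA0 _
  have hK10 : 0 ≤ K1 := by positivity
  have hptwise : ∀ k : ℕ, ∀ t ∈ Set.Ioc ((k:ℝ)/c) (((k:ℝ)+1)/c),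
      |f t - f x| ≤ K1 * |t - x| ^ α := by
    intro k t ht
    have ht0 : 0 < t := lt_of_le_of_lt (hu0 k) ht.1
    refine le_trans (hLip x t hx ht0) ?_
    rw [hK1, div_mul_eq_mul_div]
    have hAt : A ^ (α/2) ≤ (t + a₁ * x^2 + a₂ * x) ^ (α/2) := by
      refine Real.rpow_le_rpow hA0.le ?_ (by positivity)
      rw [hAdef]; linarith
    refine div_le_div_of_nonneg_left ?_ hApow hAt
    positivity
  have hSα' : Summable (fun k => w k * (K1 * ∫ t in Set.Ioc ((k:ℝ)/c) (((k:ℝ)+1)/c), |t - x| ^ α)) :=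
    (hSα.mul_left K1).congr fun k => by ring
  have habsint : ∀ k : ℕ, |∫ t in Set.Ioc ((k:ℝ)/c) (((k:ℝ)+1)/c), (f t - f x)|
      ≤ K1 * ∫ t in Set.Ioc ((k:ℝ)/c) (((k:ℝ)+1)/c), |t - x| ^ α := by
    intro k
    have h1 : |∫ t in Set.Ioc ((k:ℝ)/c) (((k:ℝ)+1)/c), (f t - f x)|
        ≤ ∫ t in Set.Ioc ((k:ℝ)/c) (((k:ℝ)+1)/c), |f t - f x| := by
      rw [← Real.norm_eq_abs]
      refine le_trans (norm_integral_le_integral_norm _) (le_of_eq ?_)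
      exact integral_congr_ae (Filter.Eventually.of_forall fun t => Real.norm_eq_abs _)
    have h2 : (∫ t in Set.Ioc ((k:ℝ)/c) (((k:ℝ)+1)/c), |f t - f x|)
        ≤ ∫ t in Set.Ioc ((k:ℝ)/c) (((k:ℝ)+1)/c), K1 * |t - x| ^ α :=
      setIntegral_mono_on (((hIf k).sub (hIconst k)).abs) ((hIα k).const_mul K1)
        measurableSet_Ioc (fun t ht => hptwise k t ht)
    calc |∫ t in Set.Ioc ((k:ℝ)/c) (((k:ℝ)+1)/c), (f t - f x)|
        ≤ ∫ t in Set.Ioc ((k:ℝ)/c) (((k:ℝ)+1)/c), K1 * |t - x| ^ α := le_trans h1 h2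
      _ = K1 * ∫ t in Set.Ioc ((k:ℝ)/c) (((k:ℝ)+1)/c), |t - x| ^ α := integral_const_mul K1 _
  have hB1 : |Kgb a n f x - f x|
      ≤ c * ∑' k, w k * (K1 * ∫ t in Set.Ioc ((k:ℝ)/c) (((k:ℝ)+1)/c), |t - x| ^ α) := by
    rw [hcenter, abs_mul, abs_of_pos hc0]
    refine mul_le_mul_of_nonneg_left ?_ hc0.le
    rw [← Real.norm_eq_abs]
    refine tsum_of_norm_bounded hSα'.hasSum fun k => ?_
    rw [Real.norm_eq_abs, abs_mul, abs_of_nonneg (hw0 k)]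
    exact mul_le_mul_of_nonneg_left (habsint k) (hw0 k)
  -- Step C : Hölder / Jensen
  set b : ℕ → ℝ := fun k => c * ∫ t in Set.Ioc ((k:ℝ)/c) (((k:ℝ)+1)/c), (t - x)^2 with hbdef
  have hb0 : ∀ k, 0 ≤ b k := fun k => mul_nonneg hc0.le (hintsq0 k)
  have hTb : Kgb a n (fun t => (t - x)^2) x = ∑' k, w k * b k := by
    rw [hKgb _, ← tsum_mul_left]
    exact tsum_congr fun k => by rw [hbdef]; ring
  have hSb : Summable (fun k => w k * b k) :=
    (hSsq.mul_left c).congr fun k => by rw [hbdef]; ring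
  have hT0 : 0 ≤ Kgb a n (fun t => (t - x)^2) x := by
    rw [hTb]
    exact tsum_nonneg fun k => mul_nonneg (hw0 k) (hb0 k)
  have hSbpow : Summable (fun k => w k * b k ^ (α/2)) := by
    refine Summable.of_nonneg_of_le
      (fun k => mul_nonneg (hw0 k) (Real.rpow_nonneg (hb0 k) _))
      (fun k => ?_) ((hwS.mul_right 1).add hSb)
    have : b k ^ (α/2) ≤ 1 + b k := rpow_le_one_add (hb0 k) (by positivity) (by linarith)
    calc w k * b k ^ (α/2) ≤ w k * (1 + b k) := mul_le_mul_of_nonneg_left this (hw0 k)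
      _ = w k * 1 + w k * b k := by ring
  have hHold : ∀ k : ℕ, c * (∫ t in Set.Ioc ((k:ℝ)/c) (((k:ℝ)+1)/c), |t - x| ^ α)
      ≤ b k ^ (α/2) := by
    intro k
    have h := interval_holder (x := x) (hult k) hα hα1
    rw [show ((k:ℝ)+1)/c - (k:ℝ)/c = 1/c by ring] at h
    have hcc : c * (1/c) ^ (1 - α/2) = c ^ (α/2) := by
      rw [one_div, Real.inv_rpow hc0.le, ← Real.rpow_neg hc0.le]
      nth_rewrite 1 [← Real.rpow_one c]
      rw [← Real.rpow_add hc0]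
      congr 1
      ring
    calc c * (∫ t in Set.Ioc ((k:ℝ)/c) (((k:ℝ)+1)/c), |t - x| ^ α)
        ≤ c * ((∫ t in Set.Ioc ((k:ℝ)/c) (((k:ℝ)+1)/c), (t - x)^2) ^ (α/2) * (1/c) ^ (1 - α/2)) :=
          mul_le_mul_of_nonneg_left h hc0.le
      _ = (c * (1/c) ^ (1 - α/2)) * (∫ t in Set.Ioc ((k:ℝ)/c) (((k:ℝ)+1)/c), (t - x)^2) ^ (α/2) := by
          ring
      _ = c ^ (α/2) * (∫ t in Set.Ioc ((k:ℝ)/c) (((k:ℝ)+1)/c), (t - x)^2) ^ (α/2) := by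
          rw [hcc]
      _ = b k ^ (α/2) := by
          rw [hbdef, Real.mul_rpow hc0.le (hintsq0 k)]
  have hSleft : Summable (fun k => w k * (c * ∫ t in Set.Ioc ((k:ℝ)/c) (((k:ℝ)+1)/c), |t - x| ^ α)) :=
    (hSα.mul_left c).congr fun k => by ring
  have hJen : (∑' k, w k * b k ^ (α/2)) ≤ (Kgb a n (fun t => (t - x)^2) x) ^ (α/2) := by
    rw [hTb]
    refine Summable.tsum_le_of_sum_le hSbpow fun s => ?_
    have hp : (1:ℝ) ≤ 2/α := by
      rw [le_div_iff₀ hα]; linarith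
    have h := Real.inner_le_weight_mul_Lp_of_nonneg s hp w (fun k => b k ^ (α/2)) hw0
      (fun k => Real.rpow_nonneg (hb0 k) _)
    have hee : ∀ k : ℕ, (b k ^ (α/2)) ^ (2/α) = b k := fun k => by
      rw [← Real.rpow_mul (hb0 k), show (α/2) * (2/α) = 1 by field_simp, Real.rpow_one]
    simp only [hee] at h
    have hinv : ((2:ℝ)/α)⁻¹ = α/2 := by rw [inv_div]
    rw [hinv] at h
    refine le_trans h ?_
    have hsum0 : (0:ℝ) ≤ ∑ k ∈ s, w k := Finset.sum_nonneg fun k _ => hw0 k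
    have hsb0 : (0:ℝ) ≤ ∑ k ∈ s, w k * b k :=
      Finset.sum_nonneg fun k _ => mul_nonneg (hw0 k) (hb0 k)
    have h1 : (∑ k ∈ s, w k) ^ (1 - α/2) ≤ 1 := by
      refine Real.rpow_le_one hsum0 ?_ (by linarith)
      rw [← hw1.tsum_eq]
      exact Summable.sum_le_tsum s (fun k _ => hw0 k) hwS
    have h2 : (∑ k ∈ s, w k * b k) ^ (α/2) ≤ (∑' k, w k * b k) ^ (α/2) := by
      refine Real.rpow_le_rpow hsb0 ?_ (by positivity)
      exact Summable.sum_le_tsum s (fun k _ => mul_nonneg (hw0 k) (hb0 k)) hSb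
    calc (∑ k ∈ s, w k) ^ (1 - α/2) * (∑ k ∈ s, w k * b k) ^ (α/2)
        ≤ 1 * (∑' k, w k * b k) ^ (α/2) :=
          mul_le_mul h1 h2 (Real.rpow_nonneg hsb0 _) zero_le_one
      _ = (∑' k, w k * b k) ^ (α/2) := one_mul _
  have hchain : c * (∑' k, w k * ∫ t in Set.Ioc ((k:ℝ)/c) (((k:ℝ)+1)/c), |t - x| ^ α)
      ≤ (Kgb a n (fun t => (t - x)^2) x) ^ (α/2) := by
    calc c * (∑' k, w k * ∫ t in Set.Ioc ((k:ℝ)/c) (((k:ℝ)+1)/c), |t - x| ^ α)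
        = ∑' k, w k * (c * ∫ t in Set.Ioc ((k:ℝ)/c) (((k:ℝ)+1)/c), |t - x| ^ α) := by
          rw [← tsum_mul_left]
          exact tsum_congr fun k => by ring
      _ ≤ ∑' k, w k * b k ^ (α/2) :=
          Summable.tsum_le_tsum (fun k => mul_le_mul_of_nonneg_left (hHold k) (hw0 k)) hSleft hSbpow
      _ ≤ (Kgb a n (fun t => (t - x)^2) x) ^ (α/2) := hJen
  -- final assembly
  refine le_trans hB1 ?_
  have e1 : c * (∑' k, w k * (K1 * ∫ t in Set.Ioc ((k:ℝ)/c) (((k:ℝ)+1)/c), |t - x| ^ α))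
      = K1 * (c * ∑' k, w k * ∫ t in Set.Ioc ((k:ℝ)/c) (((k:ℝ)+1)/c), |t - x| ^ α) := by
    have e1' : (fun k => w k * (K1 * ∫ t in Set.Ioc ((k:ℝ)/c) (((k:ℝ)+1)/c), |t - x| ^ α))
        = fun k => K1 * (w k * ∫ t in Set.Ioc ((k:ℝ)/c) (((k:ℝ)+1)/c), |t - x| ^ α) :=
      funext fun k => by ring
    rw [e1', tsum_mul_left]
    ring
  rw [e1]
  refine le_trans (mul_le_mul_of_nonneg_left hchain hK10) ?_
  rw [hK1, Real.div_rpow hT0 hA0.le]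
  rw [div_mul_eq_mul_div, mul_div_assoc]

end
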